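/- Let M be an n×n matrix with nonnegative entries whose support graph — the bipartite graph on vertex sets [n] ⊔ [n] with an edge (i,j) whenever M(i,j) ≠ 0 — contains no cycle. Then there exist vectors u, v ∈ ℝⁿ such that M(i,j) = uᵢ vⱼ for every (i,j) with M(i,j) ≠ 0; that is, M is a masked submatrix of the rank-1 matrix uv^T. -/

import Mathlib

/-- The bipartite support graph of an `n × n` matrix `M`: left vertices are the rows,
right vertices are the columns, and row `i` is adjacent to column `j` exactly when
`M i j ≠ 0`. -/
def supportGraph (n : ℕ) (M : Fin n → Fin n → ℝ) : SimpleGraph (Fin n ⊕ Fin n) where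
  Adj a b :=
    (∃ i j, a = Sum.inl i ∧ b = Sum.inr j ∧ M i j ≠ 0) ∨
    (∃ i j, a = Sum.inr j ∧ b = Sum.inl i ∧ M i j ≠ 0)
  symm := by
    constructor
    rintro a b (⟨i, j, rfl, rfl, h⟩ | ⟨i, j, rfl, rfl, h⟩)
    · exact Or.inr ⟨i, j, rfl, rfl, h⟩
    · exact Or.inl ⟨i, j, rfl, rfl, h⟩
  loopless := by
    constructor
    rintro a (⟨i, j, rfl, hb, h⟩ | ⟨i, j, rfl, hb, h⟩) <;> simp at hb

/-- **Acyclic-support nonnegative matrices are masked submatrices of rank-1 matrices.**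
Let `M` be an `n × n` matrix with nonnegative entries whose bipartite support graph
contains no cycle.  Then there are vectors `u, v ∈ ℝⁿ` with `M i j = uᵢ vⱼ` for every
`(i,j)` with `M i j ≠ 0`; that is, `M` agrees with the rank-1 matrix `u vᵀ` on its
support. -/
theorem acyclic_support_masked_rank_one
    (n : ℕ) (M : Fin n → Fin n → ℝ)
    (hnn : ∀ i j, 0 ≤ M i j)
    (hac : (supportGraph n M).IsAcyclic) :
    ∃ u v : Fin n → ℝ, ∀ i j, M i j ≠ 0 → M i j = u i * v j := by
  classical
  clear hnn
  suffices H : ∀ k (M : Fin n → Fin n → ℝ),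
      (Finset.univ.filter (fun p : Fin n × Fin n => M p.1 p.2 ≠ 0)).card = k →
      (supportGraph n M).IsAcyclic →
      ∃ u v : Fin n → ℝ, ∀ i j, M i j ≠ 0 → M i j = u i * v j by
    exact H _ M rfl hac
  intro k
  induction k using Nat.strong_induction_on with
  | _ k ih =>
  intro M hcard hac
  by_cases hz : ∀ i j, M i j = 0
  · exact ⟨0, 0, fun i j hij => absurd (hz i j) hij⟩
  push_neg at hz
  obtain ⟨i0, j0, h0⟩ := hz
  set M' : Fin n → Fin n → ℝ := fun i j => if i = i0 ∧ j = j0 then 0 else M i j with hM'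
  have hM'eq : ∀ i j, ¬(i = i0 ∧ j = j0) → M' i j = M i j := by
    intro i j h; simp [hM', h]
  have hM'00 : M' i0 j0 = 0 := by simp [hM']
  have hle : supportGraph n M' ≤ supportGraph n M := by
    rintro a b (⟨i, j, rfl, rfl, h⟩ | ⟨i, j, rfl, rfl, h⟩)
    · refine Or.inl ⟨i, j, rfl, rfl, ?_⟩
      intro hMij; apply h; by_cases hc : i = i0 ∧ j = j0 <;> simp [hM', hc, hMij]
    · refine Or.inr ⟨i, j, rfl, rfl, ?_⟩
      intro hMij; apply h; by_cases hc : i = i0 ∧ j = j0 <;> simp [hM', hc, hMij]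
  have hac' : (supportGraph n M').IsAcyclic := by
    intro v c hc
    exact hac (c.mapLe hle) ((SimpleGraph.Walk.mapLe_isCycle hle).mpr hc)
  -- cardinality drops
  have hmem : (i0, j0) ∈ Finset.univ.filter (fun p : Fin n × Fin n => M p.1 p.2 ≠ 0) := by
    simp [h0]
  have hfilt : (Finset.univ.filter (fun p : Fin n × Fin n => M' p.1 p.2 ≠ 0)) =
      (Finset.univ.filter (fun p : Fin n × Fin n => M p.1 p.2 ≠ 0)).erase (i0, j0) := by
    ext ⟨i, j⟩
    simp only [Finset.mem_filter, Finset.mem_erase, Finset.mem_univ, true_and]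
    constructor
    · intro h
      by_cases hc : i = i0 ∧ j = j0
      · exact absurd (by simp [hM', hc]) h
      · refine ⟨?_, by rwa [hM'eq _ _ hc] at h⟩
        intro he; apply hc; rw [Prod.mk.injEq] at he; exact he
    · rintro ⟨hne, h⟩
      have hc : ¬(i = i0 ∧ j = j0) := by
        rintro ⟨rfl, rfl⟩; exact hne rfl
      rwa [hM'eq _ _ hc]
  have hlt : (Finset.univ.filter (fun p : Fin n × Fin n => M' p.1 p.2 ≠ 0)).card < k := by
    rw [hfilt, ← hcard]
    exact Finset.card_erase_lt_of_mem hmem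
  obtain ⟨u, v, huv⟩ := ih _ hlt M' rfl hac'
  -- the removed edge is a bridge
  have hadj : (supportGraph n M).Adj (Sum.inl i0) (Sum.inr j0) :=
    Or.inl ⟨i0, j0, rfl, rfl, h0⟩
  have hbridge := (SimpleGraph.isAcyclic_iff_forall_adj_isBridge.mp hac) hadj
  rw [SimpleGraph.isBridge_iff] at hbridge
  have hnr : ¬(supportGraph n M').Reachable (Sum.inl i0) (Sum.inr j0) := by
    intro hr
    apply hbridge
    refine hr.mono ?_
    rintro a b hab
    refine ⟨hle hab, ?_⟩
    simp only [SimpleGraph.fromEdgeSet_adj, Set.mem_singleton_iff]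
    rintro ⟨he, -⟩
    rcases hab with ⟨i, j, rfl, rfl, h⟩ | ⟨i, j, rfl, rfl, h⟩
    · rw [Sym2.eq_iff] at he
      rcases he with ⟨h1, h2⟩ | ⟨h1, h2⟩
      · apply h
        rw [Sum.inl.injEq] at h1; rw [Sum.inr.injEq] at h2
        simp [hM', h1, h2]
      · simp at h1
    · rw [Sym2.eq_iff] at he
      rcases he with ⟨h1, h2⟩ | ⟨h1, h2⟩
      · simp at h1
      · rw [Sum.inr.injEq] at h1; rw [Sum.inl.injEq] at h2
        apply h
        simp [hM', h1, h2]
  -- helper: isolated vertices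
  have hiso_u : u i0 = 0 → ∀ j, M' i0 j = 0 := by
    intro hu j
    by_contra h
    have := huv i0 j h
    rw [hu, zero_mul] at this
    exact h this
  have hiso_v : v j0 = 0 → ∀ i, M' i j0 = 0 := by
    intro hv i
    by_contra h
    have := huv i j0 h
    rw [hv, mul_zero] at this
    exact h this
  by_cases hv0 : v j0 = 0
  · by_cases hu0 : u i0 = 0
    · refine ⟨Function.update u i0 1, Function.update v j0 (M i0 j0), ?_⟩
      intro i j hij
      by_cases hc : i = i0 ∧ j = j0
      · obtain ⟨rfl, rfl⟩ := hc
        simp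
      · have hij' : M' i j ≠ 0 := by rwa [hM'eq _ _ hc]
        rw [← hM'eq _ _ hc, huv i j hij']
        have hi : i ≠ i0 := by
          rintro rfl
          exact hij' (hiso_u hu0 j)
        have hj : j ≠ j0 := by
          rintro rfl
          exact hij' (hiso_v hv0 i)
        rw [Function.update_of_ne hi, Function.update_of_ne hj]
    · refine ⟨u, Function.update v j0 (M i0 j0 / u i0), ?_⟩
      intro i j hij
      by_cases hc : i = i0 ∧ j = j0
      · obtain ⟨rfl, rfl⟩ := hc
        rw [Function.update_self, mul_div_cancel₀ _ hu0]
      · have hij' : M' i j ≠ 0 := by rwa [hM'eq _ _ hc]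
        have hj : j ≠ j0 := by
          rintro rfl
          exact hij' (hiso_v hv0 i)
        rw [← hM'eq _ _ hc, huv i j hij', Function.update_of_ne hj]
  · by_cases hu0 : u i0 = 0
    · refine ⟨Function.update u i0 (M i0 j0 / v j0), v, ?_⟩
      intro i j hij
      by_cases hc : i = i0 ∧ j = j0
      · obtain ⟨rfl, rfl⟩ := hc
        rw [Function.update_self, div_mul_cancel₀ _ hv0]
      · have hij' : M' i j ≠ 0 := by rwa [hM'eq _ _ hc]
        have hi : i ≠ i0 := by
          rintro rfl
          exact hij' (hiso_u hu0 j)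
        rw [← hM'eq _ _ hc, huv i j hij', Function.update_of_ne hi]
    · -- both nonzero: rescale the component of j0
      have hcne : M i0 j0 / (u i0 * v j0) ≠ 0 := div_ne_zero h0 (mul_ne_zero hu0 hv0)
      refine ⟨fun i => if (supportGraph n M').Reachable (Sum.inr j0) (Sum.inl i)
                then u i / (M i0 j0 / (u i0 * v j0)) else u i,
              fun j => if (supportGraph n M').Reachable (Sum.inr j0) (Sum.inr j)
                then (M i0 j0 / (u i0 * v j0)) * v j else v j, ?_⟩
      intro i j hij
      by_cases hcc : i = i0 ∧ j = j0
      · obtain ⟨rfl, rfl⟩ := hcc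
        have h1 : ¬ (supportGraph n M').Reachable (Sum.inr j) (Sum.inl i) :=
          fun hr => hnr hr.symm
        have h2 : (supportGraph n M').Reachable (Sum.inr j) (Sum.inr j) :=
          SimpleGraph.Reachable.refl _
        simp only []
        rw [if_neg h1, if_pos h2]
        field_simp
      · have hij' : M' i j ≠ 0 := by rwa [hM'eq _ _ hcc]
        have hadj' : (supportGraph n M').Adj (Sum.inl i) (Sum.inr j) :=
          Or.inl ⟨i, j, rfl, rfl, hij'⟩
        have hiff : (supportGraph n M').Reachable (Sum.inr j0) (Sum.inl i) ↔
            (supportGraph n M').Reachable (Sum.inr j0) (Sum.inr j) :=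
          ⟨fun hr => hr.trans hadj'.reachable, fun hr => hr.trans hadj'.symm.reachable⟩
        rw [← hM'eq _ _ hcc, huv i j hij']
        by_cases hri : (supportGraph n M').Reachable (Sum.inr j0) (Sum.inl i)
        · simp only []
          rw [if_pos hri, if_pos (hiff.mp hri)]
          field_simp
        · simp only []
          rw [if_neg hri, if_neg (fun h => hri (hiff.mpr h))]
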